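/- Let α, β > 0 with α² + β² > 0, let Ẽ₃₃ > 0, set γ := √((α² + β²)/Ẽ₃₃) and λ := (α² − β²)/Ẽ₃₃, and let a, c ∈ ℝ. Define q₀(ρ) := c e^{−γρ}, q₁(ρ) := (a c/(2 Ẽ₃₃)) ρ e^{−γρ}, p₀ := (λ/γ²) q₀ = ((α²−β²)/(α²+β²)) c e^{−γρ}, and p₁ := (λ/γ²) q₁. Then for all ρ ∈ (0, ∞): (i) −q₁''(ρ) + γ² q₁(ρ) = −(a/Ẽ₃₃) q₀'(ρ); (ii) p₀''(ρ) = λ q₀(ρ); and (iii) p₁''(ρ) = λ q₁(ρ) + (a/Ẽ₃₃) p₀'(ρ). Moreover q₁(0) = p₁(0) = 0, p₀(0) = ((α²−β²)/(α²+β²)) c, and all four functions tend to 0 as ρ → ∞. -/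

import Mathlib

theorem stmt13 (α β E33 a c : ℝ) (hα : 0 < α) (hβ : 0 < β)
    (hsum : 0 < α ^ 2 + β ^ 2) (hE : 0 < E33) :
    let γ := Real.sqrt ((α ^ 2 + β ^ 2) / E33)
    let lam := (α ^ 2 - β ^ 2) / E33
    let q0 : ℝ → ℝ := fun ρ => c * Real.exp (-(γ * ρ))
    let q1 : ℝ → ℝ := fun ρ => a * c / (2 * E33) * ρ * Real.exp (-(γ * ρ))
    let p0 : ℝ → ℝ := fun ρ => lam / γ ^ 2 * q0 ρ
    let p1 : ℝ → ℝ := fun ρ => lam / γ ^ 2 * q1 ρ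
    (∀ ρ, p0 ρ = (α ^ 2 - β ^ 2) / (α ^ 2 + β ^ 2) * c * Real.exp (-(γ * ρ))) ∧
    (∀ ρ ∈ Set.Ioi (0:ℝ),
        -(deriv (deriv q1) ρ) + γ ^ 2 * q1 ρ = -(a / E33) * deriv q0 ρ) ∧
    (∀ ρ ∈ Set.Ioi (0:ℝ), deriv (deriv p0) ρ = lam * q0 ρ) ∧
    (∀ ρ ∈ Set.Ioi (0:ℝ),
        deriv (deriv p1) ρ = lam * q1 ρ + a / E33 * deriv p0 ρ) ∧
    q1 0 = 0 ∧ p1 0 = 0 ∧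
    p0 0 = (α ^ 2 - β ^ 2) / (α ^ 2 + β ^ 2) * c ∧
    Filter.Tendsto q0 Filter.atTop (nhds 0) ∧
    Filter.Tendsto q1 Filter.atTop (nhds 0) ∧
    Filter.Tendsto p0 Filter.atTop (nhds 0) ∧
    Filter.Tendsto p1 Filter.atTop (nhds 0) := by
  intro γ lam q0 q1 p0 p1
  have hdivpos : 0 < (α ^ 2 + β ^ 2) / E33 := div_pos hsum hE
  have hγ2 : γ ^ 2 = (α ^ 2 + β ^ 2) / E33 := Real.sq_sqrt hdivpos.le
  have hγpos : 0 < γ := Real.sqrt_pos.mpr hdivpos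
  have hγ : γ ≠ 0 := hγpos.ne'
  have hE' : E33 ≠ 0 := hE.ne'
  have hsum' : α ^ 2 + β ^ 2 ≠ 0 := hsum.ne'
  have hlam : lam = (α ^ 2 - β ^ 2) / E33 := rfl
  set K : ℝ := a * c / (2 * E33) with hK
  clear_value γ lam
  -- derivative of the exponential
  have hexp : ∀ ρ : ℝ, HasDerivAt (fun x => Real.exp (-(γ * x)))
      (-γ * Real.exp (-(γ * ρ))) ρ := by
    intro ρ
    have h1 : HasDerivAt (fun x : ℝ => -(γ * x)) (-γ) ρ := by
      have h := ((hasDerivAt_id ρ).const_mul γ).neg; simp only [mul_one] at h; exact h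
    simpa [mul_comm] using h1.exp
  have hq0d : ∀ ρ, HasDerivAt q0 (-γ * q0 ρ) ρ := by
    intro ρ
    have := (hexp ρ).const_mul c
    refine this.congr_deriv ?_
    simp only [q0]; ring
  have hq0' : deriv q0 = fun ρ => -γ * q0 ρ := funext fun ρ => (hq0d ρ).deriv
  have hq1d : ∀ ρ, HasDerivAt q1 (K * (1 - γ * ρ) * Real.exp (-(γ * ρ))) ρ := by
    intro ρ
    have h1 : HasDerivAt (fun x : ℝ => K * x) K ρ := by
      simpa using (hasDerivAt_id ρ).const_mul K
    have := h1.mul (hexp ρ)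
    refine this.congr_deriv ?_
    ring
  have hq1' : deriv q1 = fun ρ => K * (1 - γ * ρ) * Real.exp (-(γ * ρ)) :=
    funext fun ρ => (hq1d ρ).deriv
  have hq1dd : ∀ ρ, HasDerivAt (fun ρ => K * (1 - γ * ρ) * Real.exp (-(γ * ρ)))
      (K * γ * (γ * ρ - 2) * Real.exp (-(γ * ρ))) ρ := by
    intro ρ
    have h1 : HasDerivAt (fun x : ℝ => K * (1 - γ * x)) (K * (-γ)) ρ := by
      have : HasDerivAt (fun x : ℝ => 1 - γ * x) (-γ) ρ := by
        simpa using ((hasDerivAt_id ρ).const_mul γ).const_sub 1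
      simpa using this.const_mul K
    have := h1.mul (hexp ρ)
    refine this.congr_deriv ?_
    ring
  have hq1'' : ∀ ρ, deriv (deriv q1) ρ = K * γ * (γ * ρ - 2) * Real.exp (-(γ * ρ)) := by
    intro ρ; rw [hq1']; exact (hq1dd ρ).deriv
  -- p0 derivatives
  have hp0d : ∀ ρ, HasDerivAt p0 (lam / γ ^ 2 * (-γ * q0 ρ)) ρ :=
    fun ρ => (hq0d ρ).const_mul _
  have hp0' : deriv p0 = fun ρ => lam / γ ^ 2 * (-γ * q0 ρ) :=
    funext fun ρ => (hp0d ρ).deriv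
  have hp0dd : ∀ ρ, HasDerivAt (fun ρ => lam / γ ^ 2 * (-γ * q0 ρ))
      (lam / γ ^ 2 * (-γ * (-γ * q0 ρ))) ρ := by
    intro ρ
    have := ((hq0d ρ).const_mul (-γ)).const_mul (lam / γ ^ 2)
    exact this
  have hp0'' : ∀ ρ, deriv (deriv p0) ρ = lam * q0 ρ := by
    intro ρ
    rw [hp0']
    rw [(hp0dd ρ).deriv]
    field_simp
  -- p1 derivatives
  have hp1d : ∀ ρ, HasDerivAt p1 (lam / γ ^ 2 * (K * (1 - γ * ρ) * Real.exp (-(γ * ρ)))) ρ :=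
    fun ρ => (hq1d ρ).const_mul _
  have hp1' : deriv p1 = fun ρ => lam / γ ^ 2 * (K * (1 - γ * ρ) * Real.exp (-(γ * ρ))) :=
    funext fun ρ => (hp1d ρ).deriv
  have hp1'' : ∀ ρ, deriv (deriv p1) ρ
      = lam / γ ^ 2 * (K * γ * (γ * ρ - 2) * Real.exp (-(γ * ρ))) := by
    intro ρ
    rw [hp1']
    exact ((hq1dd ρ).const_mul (lam / γ ^ 2)).deriv
  -- p0 formula
  have hp0eq : ∀ ρ, p0 ρ = (α ^ 2 - β ^ 2) / (α ^ 2 + β ^ 2) * c * Real.exp (-(γ * ρ)) := by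
    intro ρ
    simp only [p0, q0]
    rw [hlam, hγ2]
    field_simp
  -- tendsto of exp
  have htop : Filter.Tendsto (fun ρ : ℝ => γ * ρ) Filter.atTop Filter.atTop :=
    Filter.Tendsto.const_mul_atTop hγpos Filter.tendsto_id
  have hexp0 : Filter.Tendsto (fun ρ : ℝ => Real.exp (-(γ * ρ))) Filter.atTop (nhds 0) := by
    have hbot : Filter.Tendsto (fun ρ : ℝ => -(γ * ρ)) Filter.atTop Filter.atBot :=
      Filter.tendsto_neg_atTop_atBot.comp htop
    simpa [Function.comp_def] using Real.tendsto_exp_atBot.comp hbot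
  have hq0t : Filter.Tendsto q0 Filter.atTop (nhds 0) := by
    have := hexp0.const_mul c
    simpa [q0] using this
  have hq1t : Filter.Tendsto q1 Filter.atTop (nhds 0) := by
    have h1 := (Real.tendsto_pow_mul_exp_neg_atTop_nhds_zero 1).comp htop
    have h2 := h1.const_mul (K / γ)
    rw [mul_zero] at h2
    refine h2.congr fun ρ => ?_
    simp only [Function.comp, pow_one, q1, ← hK]
    field_simp
  have hp0t : Filter.Tendsto p0 Filter.atTop (nhds 0) := by
    have := hq0t.const_mul (lam / γ ^ 2)
    simpa [p0] using this
  have hp1t : Filter.Tendsto p1 Filter.atTop (nhds 0) := by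
    have := hq1t.const_mul (lam / γ ^ 2)
    simpa [p1] using this
  refine ⟨hp0eq, ?_, fun ρ _ => hp0'' ρ, ?_, by simp [q1], by simp [p1, q1], ?_,
    hq0t, hq1t, hp0t, hp1t⟩
  · intro ρ _
    rw [hq1'' ρ, hq0']
    simp only [q0, q1]
    rw [hK]
    field_simp
    ring
  · intro ρ _
    rw [hp1'' ρ, hp0']
    simp only [q0, q1]
    rw [hK]
    field_simp
    ring
  · rw [hp0eq 0]; simp
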